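/- In any Kripke model on a directed partial pre-order, every formula φ satisfies at each world exactly one of: ◇□φ holds (φ is a button), ◇□¬φ holds and ◇□φ fails (¬φ is a button and φ is not), or both ◇¬φ and ◇φ are necessary (φ is a switch); moreover these three cases are mutually exclusive when 'button' is taken as ◇□φ, 'negation of a button' as ◇□¬φ, and 'switch' as □◇φ ∧ □◇¬φ. -/

import Mathlib

/-- Modal formulas over propositional variables of type `α`. -/
inductive ModalFormula (α : Type) : Type
  | var : α → ModalFormula α
  | fls : ModalFormula α
  | imp : ModalFormula α → ModalFormula α → ModalFormula α
  | box : ModalFormula α → ModalFormula α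

namespace ModalFormula

variable {α : Type}

def neg (φ : ModalFormula α) : ModalFormula α := φ.imp fls
def dia (φ : ModalFormula α) : ModalFormula α := (φ.neg.box).neg
def conj (φ ψ : ModalFormula α) : ModalFormula α := (φ.imp ψ.neg).neg
def disj (φ ψ : ModalFormula α) : ModalFormula α := φ.neg.imp ψ

/-- Kripke satisfaction at a world, for a model with worlds `W`,
accessibility `R` and valuation `V`. -/
def sat {W : Type} (R : W → W → Prop) (V : α → W → Prop) : W → ModalFormula α → Prop
  | w, var p => V p w
  | _, fls => False
  | w, imp φ ψ => sat R V w φ → sat R V w ψ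
  | w, box φ => ∀ v, R w v → sat R V v φ

end ModalFormula

open ModalFormula

lemma sat_dia_iff {W α : Type} (R : W → W → Prop) (V : α → W → Prop) (w : W)
    (ψ : ModalFormula α) :
    ModalFormula.sat R V w ψ.dia ↔ ∃ v, R w v ∧ ModalFormula.sat R V v ψ := by
  simp only [ModalFormula.dia, ModalFormula.neg, ModalFormula.sat]
  constructor
  · intro h
    by_contra hc
    push_neg at hc
    exact h fun v hv hs => hc v hv hs
  · rintro ⟨v, hv, hs⟩ h
    exact h v hv hs



/-- over a directed partial pre-order, at every world each
formula φ is exactly one of: a button (◇□φ), the negation of a button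
(◇□¬φ), or a switch (□◇φ ∧ □◇¬φ). -/
theorem button_negbutton_or_switch {W α : Type} (R : W → W → Prop)
    (hrefl : Reflexive R) (htrans : Transitive R)
    (hdir : ∀ w u v, R w u → R w v → ∃ z, R u z ∧ R v z)
    (V : α → W → Prop) (φ : ModalFormula α) (w : W) :
    (ModalFormula.sat R V w (φ.box.dia) ∧
       ¬ ModalFormula.sat R V w (φ.neg.box.dia) ∧
       ¬ (ModalFormula.sat R V w (φ.dia.box) ∧
            ModalFormula.sat R V w (φ.neg.dia.box))) ∨
    (¬ ModalFormula.sat R V w (φ.box.dia) ∧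
       ModalFormula.sat R V w (φ.neg.box.dia) ∧
       ¬ (ModalFormula.sat R V w (φ.dia.box) ∧
            ModalFormula.sat R V w (φ.neg.dia.box))) ∨
    (¬ ModalFormula.sat R V w (φ.box.dia) ∧
       ¬ ModalFormula.sat R V w (φ.neg.box.dia) ∧
       (ModalFormula.sat R V w (φ.dia.box) ∧
          ModalFormula.sat R V w (φ.neg.dia.box))) := by
  classical
  have hdia : ∀ (x : W) (ψ : ModalFormula α),
      ModalFormula.sat R V x ψ.dia ↔ ∃ v, R x v ∧ ModalFormula.sat R V v ψ :=
    fun x ψ => sat_dia_iff R V x ψ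
  have hnot : ∀ (v : W) (ψ : ModalFormula α),
      ModalFormula.sat R V v ψ.neg ↔ ¬ ModalFormula.sat R V v ψ := by
    intro v ψ; simp [ModalFormula.neg, ModalFormula.sat]
  -- exclusivity of the two diamonds of boxes
  have hexcl : ¬ (ModalFormula.sat R V w (φ.box.dia) ∧
      ModalFormula.sat R V w (φ.neg.box.dia)) := by
    rintro ⟨h1, h2⟩
    rw [hdia] at h1 h2
    obtain ⟨u, hwu, hu⟩ := h1
    obtain ⟨v, hwv, hv⟩ := h2
    obtain ⟨z, huz, hvz⟩ := hdir w u v hwu hwv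
    exact (hnot z φ).mp (hv z hvz) (hu z huz)
  -- ¬◇□φ implies □◇¬φ
  have hA : ∀ ψ : ModalFormula α, ¬ ModalFormula.sat R V w (ψ.box.dia) →
      ModalFormula.sat R V w (ψ.neg.dia.box) := by
    intro ψ h
    rw [hdia] at h
    push_neg at h
    intro u hwu
    rw [hdia]
    have := h u hwu
    simp only [ModalFormula.sat] at this
    push_neg at this
    obtain ⟨v, huv, hv⟩ := this
    exact ⟨v, huv, (hnot v ψ).mpr hv⟩
  have hB : ∀ h : ¬ ModalFormula.sat R V w (φ.neg.box.dia),
      ModalFormula.sat R V w (φ.dia.box) := by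
    intro h
    rw [hdia] at h
    push_neg at h
    intro u hwu
    rw [hdia]
    have := h u hwu
    simp only [ModalFormula.sat] at this
    push_neg at this
    obtain ⟨v, huv, hv⟩ := this
    exact ⟨v, huv, by_contra fun hc => hv ((hnot v φ).mpr hc)⟩
  have hC : ∀ ψ : ModalFormula α, ModalFormula.sat R V w (ψ.box.dia) →
      ¬ ModalFormula.sat R V w (ψ.neg.dia.box) := by
    intro ψ h h2
    rw [hdia] at h
    obtain ⟨u, hwu, hu⟩ := h
    have := h2 u hwu
    rw [hdia] at this
    obtain ⟨v, huv, hv⟩ := this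
    exact (hnot v ψ).mp hv (hu v huv)
  by_cases h1 : ModalFormula.sat R V w (φ.box.dia)
  · left
    refine ⟨h1, fun h2 => hexcl ⟨h1, h2⟩, fun ⟨_, hs⟩ => hC φ h1 hs⟩
  · by_cases h2 : ModalFormula.sat R V w (φ.neg.box.dia)
    · right; left
      refine ⟨h1, h2, fun ⟨hs, _⟩ => ?_⟩
      -- hs : □◇φ contradicts ◇□¬φ
      rw [hdia] at h2
      obtain ⟨u, hwu, hu⟩ := h2
      have := hs u hwu
      rw [hdia] at this
      obtain ⟨v, huv, hv⟩ := this
      exact (hnot v φ).mp (hu v huv) hv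
    · right; right
      exact ⟨h1, h2, hB h2, hA φ h1⟩
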